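/- Suppose either (i) ‖x‖ > Δ, or (ii) ‖x‖ < Δ and ‖q̄‖ > νλ. Then there exists ζ ∈ (νλ, +∞) such that g(ζ) = 0. -/

import Mathlib

noncomputable def ballProj {H : Type*} [NormedAddCommGroup H] [InnerProductSpace ℝ H]
    (Δ : ℝ) (u : H) : H := (min 1 (Δ / ‖u‖)) • u

section aux
variable {H : Type*} [NormedAddCommGroup H] [InnerProductSpace ℝ H] {Δ : ℝ}

lemma ballProj_of_le (hΔ : 0 < Δ) {u : H} (h : ‖u‖ ≤ Δ) : ballProj Δ u = u := by
  rcases eq_or_ne u 0 with rfl | hu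
  · simp [ballProj]
  · have hn : 0 < ‖u‖ := norm_pos_iff.mpr hu
    have : min 1 (Δ / ‖u‖) = 1 := min_eq_left ((one_le_div hn).mpr h)
    simp [ballProj, this]

lemma ballProj_of_gt (hΔ : 0 < Δ) {u : H} (h : Δ < ‖u‖) :
    ballProj Δ u = (Δ / ‖u‖) • u := by
  have hn : (0:ℝ) < ‖u‖ := hΔ.trans h
  have : min 1 (Δ / ‖u‖) = Δ / ‖u‖ :=
    min_eq_right ((div_le_one hn).mpr h.le)
  simp [ballProj, this]

lemma norm_ballProj_le (hΔ : 0 < Δ) (u : H) : ‖ballProj Δ u‖ ≤ min ‖u‖ Δ := by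
  rcases le_or_gt ‖u‖ Δ with h | h
  · rw [ballProj_of_le hΔ h]; exact le_min le_rfl h
  · rw [ballProj_of_gt hΔ h, norm_smul]
    have hn : (0:ℝ) < ‖u‖ := hΔ.trans h
    rw [Real.norm_of_nonneg (by positivity), div_mul_cancel₀ _ hn.ne']
    exact le_min h.le le_rfl

lemma ballProj_continuous (hΔ : 0 < Δ) : Continuous (ballProj Δ : H → H) := by
  rw [continuous_iff_continuousAt]
  intro u
  rcases eq_or_ne u 0 with rfl | hu
  · have h0 : ballProj Δ (0 : H) = 0 := by simp [ballProj]
    rw [ContinuousAt, h0]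
    exact squeeze_zero_norm
      (fun v => (norm_ballProj_le hΔ v).trans (min_le_left _ _)) tendsto_norm_zero
  · have hn : ‖u‖ ≠ 0 := norm_ne_zero_iff.mpr hu
    exact ((continuousAt_const.min
      (continuousAt_const.div continuous_norm.continuousAt hn)).smul continuousAt_id)

lemma proj_eq_ballProj (hΔ : 0 < Δ) (projC : H → H)
    (hmem : ∀ u, projC u ∈ Metric.closedBall (0 : H) Δ)
    (hnear : ∀ u, ∀ v ∈ Metric.closedBall (0 : H) Δ, ‖u - projC u‖ ≤ ‖u - v‖)
    (u : H) : projC u = ballProj Δ u := by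
  have hmem' : ∀ v, ‖projC v‖ ≤ Δ := by
    intro v; have := hmem v; rwa [Metric.mem_closedBall, dist_zero_right] at this
  rcases le_or_gt ‖u‖ Δ with h | h
  · rw [ballProj_of_le hΔ h]
    have hu : u ∈ Metric.closedBall (0 : H) Δ := by
      rwa [Metric.mem_closedBall, dist_zero_right]
    have h1 : ‖u - projC u‖ ≤ 0 := by simpa using hnear u u hu
    have h2 : u - projC u = 0 :=
      norm_eq_zero.mp (le_antisymm h1 (norm_nonneg _))
    have := sub_eq_zero.mp h2
    exact this.symm
  · -- Δ < ‖u‖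
    have hn : (0:ℝ) < ‖u‖ := hΔ.trans h
    set p : H := (Δ / ‖u‖) • u with hp
    have hpnorm : ‖p‖ = Δ := by
      rw [hp, norm_smul, Real.norm_of_nonneg (by positivity), div_mul_cancel₀ _ hn.ne']
    have hpmem : p ∈ Metric.closedBall (0 : H) Δ := by
      rw [Metric.mem_closedBall, dist_zero_right, hpnorm]
    have hup : ‖u - p‖ = ‖u‖ - Δ := by
      have : u - p = (1 - Δ / ‖u‖) • u := by
        rw [hp, sub_smul, one_smul]
      rw [this, norm_smul, Real.norm_of_nonneg]
      · field_simp
      · have : Δ / ‖u‖ ≤ 1 := (div_le_one hn).mpr h.le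
        linarith
    set v : H := projC u with hv
    have h1 : ‖u - v‖ ≤ ‖u‖ - Δ := hup ▸ hnear u p hpmem
    have h2 : ‖v‖ ≤ Δ := hmem' u
    have h3 : ‖u‖ - ‖v‖ ≤ ‖u - v‖ := norm_sub_norm_le u v
    have hveq : ‖v‖ = Δ := le_antisymm h2 (by linarith)
    have huv : ‖u - v‖ = ‖u‖ - Δ := le_antisymm h1 (by rw [← hveq]; linarith)
    have hadd : ‖(u - v) + v‖ = ‖u - v‖ + ‖v‖ := by
      rw [sub_add_cancel, huv, hveq]; ring
    have hray : SameRay ℝ (u - v) v := sameRay_iff_norm_add.mpr hadd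
    have huv0 : u - v ≠ 0 := by
      intro h0; rw [h0, norm_zero] at huv; linarith
    have hv0 : v ≠ 0 := by
      intro h0; rw [h0, norm_zero] at hveq; linarith
    obtain ⟨r, s, hr, hs, hrs⟩ := hray.exists_pos huv0 hv0
    have key : r • u = (r + s) • v := by
      have : r • u - r • v = s • v := by rw [← smul_sub]; exact hrs
      rw [add_smul, ← this]; abel
    have hrs0 : (0:ℝ) < r + s := by linarith
    have hveq2 : v = (r / (r + s)) • u := by
      have h4 : (r + s)⁻¹ • ((r + s) • v) = (r + s)⁻¹ • (r • u) := by rw [key]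
      rw [smul_smul, smul_smul, inv_mul_cancel₀ hrs0.ne', one_smul] at h4
      rw [h4, div_eq_inv_mul]
    have hscal : (r / (r + s)) * ‖u‖ = Δ := by
      have := hveq
      rw [hveq2, norm_smul, Real.norm_of_nonneg (by positivity)] at this
      linarith
    have hk : r / (r + s) = Δ / ‖u‖ := by
      rw [div_eq_div_iff hrs0.ne' hn.ne']
      have := hscal
      field_simp at this ⊢
      linarith
    rw [ballProj_of_gt hΔ h, hveq2, hk]
end aux

/-- Existence of a root of g in (νλ, ∞) when ‖x‖ > Δ, or when ‖x‖ < Δ and ‖q̄‖ > νλ. -/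
theorem g_has_root {H : Type*}
    [NormedAddCommGroup H] [InnerProductSpace ℝ H] [FiniteDimensional ℝ H]
    (ν lam Δ : ℝ) (hν : 0 < ν) (hlam : 0 < lam) (hΔ : 0 < Δ)
    (x qbar : H)
    (hcase : Δ < ‖x‖ ∨ (‖x‖ < Δ ∧ ν * lam < ‖qbar‖))
    (projC : H → H)
    (hmem : ∀ u, projC u ∈ Metric.closedBall (0 : H) Δ)
    (hnear : ∀ u, ∀ v ∈ Metric.closedBall (0 : H) Δ, ‖u - projC u‖ ≤ ‖u - v‖)
    (w : ℝ → H) (g : ℝ → ℝ)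
    (hw : ∀ ζ, w ζ = (ζ / (ζ - ν * lam)) • (x + projC (((ζ - ν * lam) / ζ) • qbar - x)))
    (hg : ∀ ζ, g ζ = ζ - ‖w ζ‖) :
    ∃ ζ : ℝ, ν * lam < ζ ∧ g ζ = 0 := by
  set c : ℝ := ν * lam with hc
  have hc0 : 0 < c := mul_pos hν hlam
  have hproj : ∀ u, projC u = ballProj Δ u := proj_eq_ballProj hΔ projC hmem hnear
  have hg' : ∀ ζ, g ζ =
      ζ - ‖(ζ / (ζ - c)) • (x + ballProj Δ (((ζ - c) / ζ) • qbar - x))‖ := by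
    intro ζ; rw [hg, hw, hproj]
  -- choose a with c < a and g a < 0
  obtain ⟨a, ha1, ha2⟩ : ∃ a, c < a ∧ g a < 0 := by
    rcases hcase with hx | ⟨hx, hq⟩
    · -- ‖x‖ > Δ
      refine ⟨c + (‖x‖ - Δ) / 2, by linarith, ?_⟩
      set a := c + (‖x‖ - Δ) / 2 with hadef
      have ha0 : 0 < a := by rw [hadef]; linarith
      have hac : 0 < a - c := by rw [hadef]; linarith
      rw [hg']
      have hlow : ‖x‖ - Δ ≤ ‖x + ballProj Δ (((a - c) / a) • qbar - x)‖ := by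
        set P := ballProj Δ (((a - c) / a) • qbar - x)
        have hP : ‖P‖ ≤ Δ :=
          (norm_ballProj_le hΔ _).trans (min_le_right _ _)
        have : ‖x‖ ≤ ‖x + P‖ + ‖P‖ := by
          calc ‖x‖ = ‖(x + P) - P‖ := by rw [add_sub_cancel_right]
          _ ≤ ‖x + P‖ + ‖P‖ := norm_sub_le _ _
        linarith
      have hfac : a < (a / (a - c)) * (‖x‖ - Δ) := by
        rw [div_mul_eq_mul_div, lt_div_iff₀ hac]
        have : a - c = (‖x‖ - Δ) / 2 := by rw [hadef]; ring
        rw [this]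
        have hxd : 0 < ‖x‖ - Δ := by linarith
        nlinarith
      have : (a / (a - c)) * (‖x‖ - Δ) ≤
          ‖(a / (a - c)) • (x + ballProj Δ (((a - c) / a) • qbar - x))‖ := by
        rw [norm_smul, Real.norm_of_nonneg (div_nonneg ha0.le hac.le)]
        exact mul_le_mul_of_nonneg_left hlow (by positivity)
      linarith
    · -- ‖x‖ < Δ and c < ‖qbar‖
      have hq0 : (0:ℝ) < ‖qbar‖ := hc0.trans hq
      set δ : ℝ := min (‖qbar‖ - c) (c * (Δ - ‖x‖) / ‖qbar‖) / 2 with hδ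
      have hδ0 : 0 < δ := by
        apply div_pos _ two_pos
        exact lt_min (by linarith)
          (div_pos (mul_pos hc0 (by linarith : (0:ℝ) < Δ - ‖x‖)) hq0)
      refine ⟨c + δ, by linarith, ?_⟩
      set a := c + δ with hadef
      have ha0 : 0 < a := by rw [hadef]; linarith
      have hac : a - c = δ := by rw [hadef]; ring
      rw [hg']
      have ht : ((a - c) / a) * ‖qbar‖ ≤ (Δ - ‖x‖) / 2 := by
        have h1 : (a - c) / a ≤ δ / c := by
          rw [hac]
          gcongr
          all_goals first
            | exact hδ0.le
            | exact hc0
            | (rw [hadef]; linarith)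
        have h2 : δ ≤ c * (Δ - ‖x‖) / ‖qbar‖ / 2 := by
          rw [hδ]
          have := min_le_right (‖qbar‖ - c) (c * (Δ - ‖x‖) / ‖qbar‖)
          linarith
        have h3 : ((a - c) / a) * ‖qbar‖ ≤ (δ / c) * ‖qbar‖ :=
          mul_le_mul_of_nonneg_right h1 hq0.le
        have h4 : (δ / c) * ‖qbar‖ ≤ (c * (Δ - ‖x‖) / ‖qbar‖ / 2 / c) * ‖qbar‖ := by
          gcongr
        have h5 : (c * (Δ - ‖x‖) / ‖qbar‖ / 2 / c) * ‖qbar‖ = (Δ - ‖x‖) / 2 := by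
          field_simp
        linarith
      have hvΔ : ‖((a - c) / a) • qbar - x‖ ≤ Δ := by
        have : ‖((a - c) / a) • qbar - x‖ ≤ ‖((a - c) / a) • qbar‖ + ‖x‖ :=
          norm_sub_le _ _
        rw [norm_smul, Real.norm_of_nonneg
          (div_nonneg (by rw [hac]; exact hδ0.le) ha0.le)] at this
        linarith
      rw [ballProj_of_le hΔ hvΔ]
      have hsimp : x + (((a - c) / a) • qbar - x) = ((a - c) / a) • qbar := by abel
      rw [hsimp, smul_smul]
      have hmul : a / (a - c) * ((a - c) / a) = 1 := by
        have h1 : a - c ≠ 0 := by rw [hac]; exact hδ0.ne'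
        rw [div_mul_div_comm, div_eq_one_iff_eq (mul_ne_zero h1 ha0.ne')]
        ring
      rw [hmul, one_smul]
      have : a < ‖qbar‖ := by
        have : δ ≤ (‖qbar‖ - c) / 2 := by
          rw [hδ]
          have := min_le_left (‖qbar‖ - c) (c * (Δ - ‖x‖) / ‖qbar‖)
          linarith
        rw [hadef]; linarith
      linarith
  -- choose b ≥ a with g b > 0
  set b : ℝ := max a (max (2 * c) (2 * (‖x‖ + Δ) + 1)) with hb
  have hab : a ≤ b := le_max_left _ _
  have hb2c : 2 * c ≤ b := le_trans (le_max_left _ _) (le_max_right _ _)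
  have hbx : 2 * (‖x‖ + Δ) + 1 ≤ b := le_trans (le_max_right _ _) (le_max_right _ _)
  have hbc : c < b := by linarith
  have hb0 : 0 < b := hc0.trans hbc
  have hgb : 0 < g b := by
    rw [hg']
    have hbound : ‖(b / (b - c)) • (x + ballProj Δ (((b - c) / b) • qbar - x))‖ ≤
        2 * (‖x‖ + Δ) := by
      rw [norm_smul, Real.norm_of_nonneg (div_nonneg hb0.le (by linarith))]
      have hP : ‖ballProj Δ (((b - c) / b) • qbar - x)‖ ≤ Δ :=
        (norm_ballProj_le hΔ _).trans (min_le_right _ _)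
      have h1 : ‖x + ballProj Δ (((b - c) / b) • qbar - x)‖ ≤ ‖x‖ + Δ :=
        (norm_add_le _ _).trans (by linarith)
      have h2 : b / (b - c) ≤ 2 := by
        rw [div_le_iff₀ (by linarith)]
        linarith
      exact mul_le_mul h2 h1 (norm_nonneg _) (by norm_num)
    linarith
  -- continuity of g on [a, b]
  have hcont : ContinuousOn g (Set.Icc a b) := by
    have : ContinuousOn (fun ζ : ℝ =>
        ζ - ‖(ζ / (ζ - c)) • (x + ballProj Δ (((ζ - c) / ζ) • qbar - x))‖)
        (Set.Icc a b) := by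
      have hne1 : ∀ ζ ∈ Set.Icc a b, ζ - c ≠ 0 := by
        intro ζ hζ
        have : c < ζ := lt_of_lt_of_le ha1 hζ.1
        intro h0; linarith [sub_eq_zero.mp h0]
      have hne2 : ∀ ζ ∈ Set.Icc a b, ζ ≠ 0 := by
        intro ζ hζ
        have : c < ζ := lt_of_lt_of_le ha1 hζ.1
        intro h0; linarith
      apply ContinuousOn.sub continuousOn_id
      apply ContinuousOn.norm
      apply ContinuousOn.smul
      · exact ContinuousOn.div continuousOn_id
          (continuousOn_id.sub continuousOn_const) hne1
      · apply ContinuousOn.add continuousOn_const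
        apply (ballProj_continuous hΔ).comp_continuousOn
        apply ContinuousOn.sub _ continuousOn_const
        exact ContinuousOn.smul
          (ContinuousOn.div (continuousOn_id.sub continuousOn_const)
            continuousOn_id hne2) continuousOn_const
    exact this.congr (fun ζ _ => hg' ζ)
  have h0mem : (0:ℝ) ∈ Set.Icc (g a) (g b) := ⟨ha2.le, hgb.le⟩
  obtain ⟨ζ, hζmem, hζ⟩ := intermediate_value_Icc hab hcont h0mem
  exact ⟨ζ, lt_of_lt_of_le ha1 hζmem.1, hζ⟩
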